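/- Let F ∈ ℂ[x_1,…,x_n] be a nonzero homogeneous form of degree d, let α ∈ T_1 be a linear form in the dual variables, and suppose F = c_1 ℓ_1^d + … + c_r ℓ_r^d where ℓ_1,…,ℓ_r are pairwise non-proportional nonzero linear forms and c_i ∈ ℂ. Then the number of indices i with α∘ℓ_i ≠ 0 is at least al(α∘F) − al(α²∘F); that is, at least al(α∘F) − al(α²∘F) of the points [ℓ_i] lie off the hyperplane defined by α. -/

import Mathlib

open MvPolynomial

/-- The iterated partial derivative `∂^m` applied to `F`: on a monomial `x^k` it gives
`(∏ᵢ kᵢ(kᵢ-1)⋯(kᵢ-mᵢ+1)) · x^(k-m)`, i.e. each dual variable `αᵢ` acts as `∂/∂xᵢ`. -/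
noncomputable def mderiv {σ : Type*} (m : σ →₀ ℕ) (F : MvPolynomial σ ℂ) :
    MvPolynomial σ ℂ :=
  (AddMonoidAlgebra.coeff F).sum fun k c =>
    MvPolynomial.monomial (k - m) (c * ∏ i ∈ m.support, (Nat.descFactorial (k i) (m i) : ℂ))

/-- The apolarity action `Θ ∘ F` of a polynomial `Θ` in the dual variables on `F`,
as a constant-coefficient differential operator. -/
noncomputable def diffOp {σ : Type*} (Θ F : MvPolynomial σ ℂ) : MvPolynomial σ ℂ :=
  (AddMonoidAlgebra.coeff Θ).sum fun m c => c • mderiv m F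

/-- Apolar length `al F`: the dimension of the space `Diff(F) = {Θ ∘ F : Θ ∈ T}` of all
partial derivatives of `F` of all orders (including `F` itself). -/
noncomputable def apolarLength {σ : Type*} (F : MvPolynomial σ ℂ) : ℕ :=
  Module.finrank ℂ (Submodule.span ℂ (Set.range fun Θ => diffOp Θ F))

/-- The Hilbert function of the apolar algebra of `F`: the dimension of the span of the
`i`-th order partial derivatives `{Θ ∘ F : Θ homogeneous of degree i}`. -/
noncomputable def hilbFn {σ : Type*} (F : MvPolynomial σ ℂ) (i : ℕ) : ℕ :=
  Module.finrank ℂ (Submodule.span ℂ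
    {G : MvPolynomial σ ℂ | ∃ Θ : MvPolynomial σ ℂ, Θ.IsHomogeneous i ∧ diffOp Θ F = G})

/-- Waring rank of a degree-`d` form: the least `r` such that
`F = c₁ ℓ₁^d + ⋯ + c_r ℓ_r^d` for linear forms `ℓᵢ` and scalars `cᵢ ∈ ℂ`. -/
noncomputable def waringRank {σ : Type*} [Fintype σ] (d : ℕ) (F : MvPolynomial σ ℂ) : ℕ :=
  sInf {r : ℕ | ∃ (c : Fin r → ℂ) (v : Fin r → σ → ℂ),
    F = ∑ i, c i • (∑ j, v i j • MvPolynomial.X j) ^ d}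

variable {σ : Type*}

lemma mderiv_monomial (m k : σ →₀ ℕ) (c : ℂ) :
    mderiv m (monomial k c) =
      monomial (k - m) (c * ∏ i ∈ m.support, (Nat.descFactorial (k i) (m i) : ℂ)) := by
  unfold mderiv
  rw [MvPolynomial.sum_monomial_eq]
  simp

lemma mderiv_add (m : σ →₀ ℕ) (F G : MvPolynomial σ ℂ) :
    mderiv m (F + G) = mderiv m F + mderiv m G := by
  classical
  unfold mderiv
  rw [AddMonoidAlgebra.coeff_add]
  apply Finsupp.sum_add_index <;> intros <;> simp [add_mul]

lemma mderiv_smul (m : σ →₀ ℕ) (a : ℂ) (F : MvPolynomial σ ℂ) :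
    mderiv m (a • F) = a • mderiv m F := by
  unfold mderiv
  rw [AddMonoidAlgebra.coeff_smul, Finsupp.sum_smul_index' (by intro i; simp), Finsupp.smul_sum]
  simp [mul_assoc, MvPolynomial.smul_monomial]

noncomputable def mderivL (m : σ →₀ ℕ) : MvPolynomial σ ℂ →ₗ[ℂ] MvPolynomial σ ℂ where
  toFun := mderiv m
  map_add' := mderiv_add m
  map_smul' := mderiv_smul m

@[simp] lemma mderivL_apply (m : σ →₀ ℕ) (F : MvPolynomial σ ℂ) : mderivL m F = mderiv m F := rfl

lemma mderiv_zero (F : MvPolynomial σ ℂ) : mderiv 0 F = F := by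
  unfold mderiv
  simp [MvPolynomial.sum_def]

lemma descFactorial_add' (n a b : ℕ) :
    n.descFactorial (a + b) = n.descFactorial a * (n - a).descFactorial b := by
  induction b with
  | zero => simp
  | succ b ih =>
      rw [← Nat.add_assoc, Nat.descFactorial_succ, Nat.descFactorial_succ, ih,
        Nat.sub_sub]
      ring

lemma prod_extend (u t : Finset σ) (g : σ → ℂ) (h : t ⊆ u)
    (h0 : ∀ x ∈ u, x ∉ t → g x = 1) : ∏ i ∈ t, g i = ∏ i ∈ u, g i :=
  Finset.prod_subset h h0

lemma mderiv_mderiv (m m' : σ →₀ ℕ) (F : MvPolynomial σ ℂ) :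
    mderiv m (mderiv m' F) = mderiv (m' + m) F := by
  classical
  induction F using MvPolynomial.induction_on' with
  | add p q hp hq => rw [mderiv_add, mderiv_add, mderiv_add, hp, hq]
  | monomial k c =>
    rw [mderiv_monomial, mderiv_monomial, mderiv_monomial]
    rw [tsub_tsub]
    congr 1
    have h1 := prod_extend (m'.support ∪ m.support) m'.support
      (fun i => (Nat.descFactorial (k i) (m' i) : ℂ)) Finset.subset_union_left
      (by intro x _ hx; simp [Finsupp.notMem_support_iff.mp hx])
    have h2 := prod_extend (m'.support ∪ m.support) m.support
      (fun i => (Nat.descFactorial ((k - m') i) (m i) : ℂ)) Finset.subset_union_right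
      (by intro x _ hx; simp [Finsupp.notMem_support_iff.mp hx])
    have h3 := prod_extend (m'.support ∪ m.support) (m' + m).support
      (fun i => (Nat.descFactorial (k i) ((m' + m) i) : ℂ)) Finsupp.support_add
      (by intro x _ hx
          have : (m' + m) x = 0 := Finsupp.notMem_support_iff.mp hx
          simp [this])
    rw [h1, h2, h3, mul_assoc, ← Finset.prod_mul_distrib]
    congr 1
    apply Finset.prod_congr rfl
    intro i _
    rw [Finsupp.add_apply, Finsupp.tsub_apply, descFactorial_add']
    push_cast
    ring

lemma diffOp_monomial (m : σ →₀ ℕ) (c : ℂ) (F : MvPolynomial σ ℂ) :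
    diffOp (monomial m c) F = c • mderiv m F := by
  unfold diffOp
  rw [MvPolynomial.sum_monomial_eq]
  simp

lemma diffOp_add_left (Θ Ψ F : MvPolynomial σ ℂ) :
    diffOp (Θ + Ψ) F = diffOp Θ F + diffOp Ψ F := by
  classical
  unfold diffOp
  rw [AddMonoidAlgebra.coeff_add]
  apply Finsupp.sum_add_index <;> intros <;> simp [add_smul]

lemma diffOp_addF (Θ F G : MvPolynomial σ ℂ) :
    diffOp Θ (F + G) = diffOp Θ F + diffOp Θ G := by
  unfold diffOp
  rw [← Finsupp.sum_add]
  apply Finsupp.sum_congr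
  intro m _
  rw [mderiv_add, smul_add]

lemma diffOp_smulF (Θ : MvPolynomial σ ℂ) (a : ℂ) (F : MvPolynomial σ ℂ) :
    diffOp Θ (a • F) = a • diffOp Θ F := by
  unfold diffOp
  rw [Finsupp.smul_sum]
  apply Finsupp.sum_congr
  intro m _
  rw [mderiv_smul, smul_comm]

noncomputable def diffOpL (Θ : MvPolynomial σ ℂ) : MvPolynomial σ ℂ →ₗ[ℂ] MvPolynomial σ ℂ where
  toFun := diffOp Θ
  map_add' := diffOp_addF Θ
  map_smul' := diffOp_smulF Θ

@[simp] lemma diffOpL_apply (Θ F : MvPolynomial σ ℂ) : diffOpL Θ F = diffOp Θ F := rfl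

lemma diffOp_mul (Θ Ψ F : MvPolynomial σ ℂ) :
    diffOp (Θ * Ψ) F = diffOp Θ (diffOp Ψ F) := by
  classical
  induction Θ using MvPolynomial.induction_on' with
  | add p q hp hq => rw [add_mul, diffOp_add_left, diffOp_add_left, hp, hq]
  | monomial m c =>
    induction Ψ using MvPolynomial.induction_on' with
    | add p q hp hq =>
        rw [mul_add, diffOp_add_left, hp, hq, diffOp_add_left, diffOp_addF]
    | monomial m' c' =>
        rw [MvPolynomial.monomial_mul, diffOp_monomial, diffOp_monomial, diffOp_monomial,
          mderiv_smul, mderiv_mderiv, add_comm m' m]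
        rw [smul_smul, mul_comm c c']

lemma mderiv_single (j : σ) (F : MvPolynomial σ ℂ) :
    mderiv (Finsupp.single j 1) F = MvPolynomial.pderiv j F := by
  classical
  induction F using MvPolynomial.induction_on' with
  | add p q hp hq => rw [mderiv_add, hp, hq, map_add]
  | monomial k c =>
    rw [mderiv_monomial, MvPolynomial.pderiv_monomial]
    congr 1
    rw [Finsupp.support_single_ne_zero _ one_ne_zero]
    simp

lemma degree_one_single {m : σ →₀ ℕ} (h : ∑ i ∈ m.support, m i = 1) :
    ∃ j, m = Finsupp.single j 1 := by
  classical
  have hne : m.support.Nonempty := by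
    by_contra hc
    rw [Finset.not_nonempty_iff_eq_empty] at hc
    rw [hc] at h
    simp at h
  obtain ⟨j, hj⟩ := hne
  refine ⟨j, ?_⟩
  have hmj : 1 ≤ m j := Nat.one_le_iff_ne_zero.mpr (Finsupp.mem_support_iff.mp hj)
  have hle : m j ≤ ∑ i ∈ m.support, m i := Finset.single_le_sum (fun i _ => Nat.zero_le _) hj
  have hmj1 : m j = 1 := le_antisymm (h ▸ hle) hmj
  ext i
  rcases eq_or_ne i j with rfl | hij
  · simp [hmj1]
  · rw [Finsupp.single_apply, if_neg (Ne.symm hij)]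
    by_contra hc
    have hi : i ∈ m.support := Finsupp.mem_support_iff.mpr hc
    have : m j + m i ≤ ∑ i ∈ m.support, m i := by
      rw [← Finset.sum_pair (Ne.symm hij)]
      exact Finset.sum_le_sum_of_subset (by intro x hx; simp at hx; rcases hx with rfl|rfl <;> assumption)
    omega

lemma isHomog_one_mem {α : MvPolynomial σ ℂ} (hα : α.IsHomogeneous 1)
    {m : σ →₀ ℕ} (hm : m ∈ α.support) : ∃ j, m = Finsupp.single j 1 := by
  apply degree_one_single
  have := hα (MvPolynomial.mem_support_iff.mp hm)
  simpa [Finsupp.weight, Finsupp.linearCombination, Finsupp.sum] using this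

lemma diffOp_eq_sum (Θ F : MvPolynomial σ ℂ) :
    diffOp Θ F = ∑ m ∈ Θ.support, MvPolynomial.coeff m Θ • mderiv m F := by
  unfold diffOp; rw [MvPolynomial.sum_def]

lemma diffOp_homog1_mul {α : MvPolynomial σ ℂ} (hα : α.IsHomogeneous 1)
    (F G : MvPolynomial σ ℂ) :
    diffOp α (F * G) = diffOp α F * G + F * diffOp α G := by
  rw [diffOp_eq_sum, diffOp_eq_sum, diffOp_eq_sum, Finset.sum_mul, Finset.mul_sum,
    ← Finset.sum_add_distrib]
  apply Finset.sum_congr rfl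
  intro m hm
  obtain ⟨j, rfl⟩ := isHomog_one_mem hα hm
  rw [mderiv_single, mderiv_single, mderiv_single, MvPolynomial.pderiv_mul]
  rw [smul_add, smul_mul_assoc, mul_smul_comm]

lemma diffOp_linear_C {α ℓ : MvPolynomial σ ℂ} (hα : α.IsHomogeneous 1)
    (hl : ℓ.IsHomogeneous 1) : ∃ s : ℂ, diffOp α ℓ = MvPolynomial.C s := by
  classical
  have key : diffOp α ℓ ∈ Submodule.span ℂ {(1 : MvPolynomial σ ℂ)} := by
    rw [diffOp_eq_sum]
    apply Submodule.sum_mem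
    intro m hm
    obtain ⟨j, rfl⟩ := isHomog_one_mem hα hm
    rw [mderiv_single]
    apply Submodule.smul_mem
    have hrw : MvPolynomial.pderiv j ℓ
        = ∑ m' ∈ ℓ.support, MvPolynomial.pderiv j (monomial m' (coeff m' ℓ)) := by
      conv_lhs => rw [ℓ.as_sum]
      rw [map_sum]
    rw [hrw]
    apply Submodule.sum_mem
    intro m' hm'
    obtain ⟨j', rfl⟩ := isHomog_one_mem hl hm'
    rw [MvPolynomial.pderiv_monomial]
    rcases eq_or_ne j' j with rfl | hij
    · simp only [tsub_self]
      have hmem : ∀ b : ℂ, (monomial (0 : σ →₀ ℕ)) b ∈ Submodule.span ℂ {(1 : MvPolynomial σ ℂ)} := by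
        intro b
        rw [show (monomial (0 : σ →₀ ℕ)) b = b • 1 by
          rw [MvPolynomial.smul_eq_C_mul, mul_one, MvPolynomial.C_apply]]
        exact Submodule.smul_mem _ _ (Submodule.mem_span_singleton_self _)
      exact hmem _
    · rw [Finsupp.single_apply, if_neg (by exact fun h => hij h)]
      simp
  rw [Submodule.mem_span_singleton] at key
  obtain ⟨s, hs⟩ := key
  exact ⟨s, by rw [← hs, MvPolynomial.smul_eq_C_mul, mul_one]⟩

lemma diffOp_pow {α : MvPolynomial σ ℂ} (hα : α.IsHomogeneous 1)
    (ℓ : MvPolynomial σ ℂ) (e : ℕ) :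
    diffOp α (ℓ ^ (e + 1)) = MvPolynomial.C ((e + 1 : ℕ) : ℂ) * diffOp α ℓ * ℓ ^ e := by
  induction e with
  | zero => simp
  | succ e ih =>
      rw [pow_succ, diffOp_homog1_mul hα, ih]
      have : (((e + 1 + 1 : ℕ) : ℂ)) = ((e + 1 : ℕ) : ℂ) + 1 := by push_cast; ring
      rw [this, map_add, map_one]
      ring

lemma diffOp_X (j : σ) (F : MvPolynomial σ ℂ) :
    diffOp (MvPolynomial.X j) F = MvPolynomial.pderiv j F := by
  rw [show (MvPolynomial.X j : MvPolynomial σ ℂ) = monomial (Finsupp.single j 1) 1 from rfl,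
    diffOp_monomial, one_smul, mderiv_single]

lemma pderiv_linear_C {ℓ : MvPolynomial σ ℂ} (hl : ℓ.IsHomogeneous 1) (j : σ) :
    ∃ a : ℂ, MvPolynomial.pderiv j ℓ = MvPolynomial.C a := by
  rw [← diffOp_X]
  exact diffOp_linear_C (MvPolynomial.isHomogeneous_X _ _) hl

lemma diffOp_zeroF (Θ : MvPolynomial σ ℂ) : diffOp Θ 0 = 0 := map_zero (diffOpL Θ)

lemma diffOp_one {α : MvPolynomial σ ℂ} (hα : α.IsHomogeneous 1) :
    diffOp α (1 : MvPolynomial σ ℂ) = 0 := by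
  have h := diffOp_homog1_mul hα (1 : MvPolynomial σ ℂ) 1
  rw [mul_one, mul_one, one_mul] at h
  -- h : D1 = D1 + D1
  have h2 : diffOp α 1 + 0 = diffOp α 1 + diffOp α 1 := by rw [add_zero]; exact h
  exact (add_left_cancel h2).symm

lemma finrank_map_add_inf {M : Type*} [AddCommGroup M] [Module ℂ M]
    (f : M →ₗ[ℂ] M) (p : Submodule ℂ M) [FiniteDimensional ℂ p] :
    Module.finrank ℂ (p.map f) + Module.finrank ℂ ((LinearMap.ker f ⊓ p : Submodule ℂ M))
      = Module.finrank ℂ p := by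
  have h := LinearMap.finrank_range_add_finrank_ker (f.domRestrict p)
  rw [LinearMap.range_domRestrict, LinearMap.ker_domRestrict] at h
  have heq : (LinearMap.ker f).comap p.subtype
      = ((LinearMap.ker f ⊓ p : Submodule ℂ M)).comap p.subtype := by
    ext x
    simp only [Submodule.mem_comap, Submodule.mem_inf]
    exact ⟨fun hx => ⟨hx, x.2⟩, fun hx => hx.1⟩
  rw [heq, (Submodule.comapSubtypeEquivOfLe (inf_le_right : LinearMap.ker f ⊓ p ≤ p)).finrank_eq] at h
  exact h

lemma apolarLength_zero : apolarLength (0 : MvPolynomial σ ℂ) = 0 := by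
  unfold apolarLength
  have h : (Set.range fun Θ : MvPolynomial σ ℂ => diffOp Θ 0) = {0} := by
    ext x
    simp [diffOp_zeroF, eq_comm]
  rw [h, Submodule.span_zero_singleton, finrank_bot]

/-- If `F = ∑ cᵢ ℓᵢ^d` with the `ℓᵢ` pairwise non-proportional nonzero linear forms,
then at least `al(α∘F) − al(α²∘F)` of the `ℓᵢ` satisfy `α∘ℓᵢ ≠ 0`, i.e. at least that
many of the points `[ℓᵢ]` lie off the hyperplane defined by `α`. -/
theorem stmt6 (n d : ℕ) (F : MvPolynomial (Fin n) ℂ) (hF : F ≠ 0)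
    (hFd : F.IsHomogeneous d)
    (α : MvPolynomial (Fin n) ℂ) (hα : α.IsHomogeneous 1)
    (r : ℕ) (c : Fin r → ℂ) (ℓ : Fin r → MvPolynomial (Fin n) ℂ)
    (hℓ : ∀ i, (ℓ i).IsHomogeneous 1) (hℓ0 : ∀ i, ℓ i ≠ 0)
    (hprop : ∀ i j, i ≠ j → ∀ t : ℂ, ℓ i ≠ t • ℓ j)
    (hFsum : F = ∑ i, c i • ℓ i ^ d) :
    apolarLength (diffOp α F) - apolarLength (diffOp (α ^ 2) F)
      ≤ Set.ncard {i : Fin r | diffOp α (ℓ i) ≠ 0} := by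
  classical
  have hGsum : diffOp α F = ∑ i, c i • diffOp α (ℓ i ^ d) := by
    rw [hFsum]
    rw [show diffOp α (∑ i, c i • ℓ i ^ d) = diffOpL α (∑ i, c i • ℓ i ^ d) from rfl,
      map_sum]
    simp only [map_smul, diffOpL_apply]
  rcases Nat.eq_zero_or_pos d with rfl | hd
  · have hG0 : diffOp α F = 0 := by
      rw [hGsum]
      simp [diffOp_one hα]
    rw [hG0, apolarLength_zero]
    simp
  obtain ⟨e, rfl⟩ : ∃ e, d = e + 1 := ⟨d - 1, (Nat.succ_pred_eq_of_pos hd).symm⟩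
  choose s hsC using fun i => diffOp_linear_C hα (hℓ i)
  set S : Finset (Fin r) := Finset.univ.filter (fun i => diffOp α (ℓ i) ≠ 0) with hSdef
  set A : Finset (MvPolynomial (Fin n) ℂ) :=
    (S ×ˢ Finset.range (e + 1)).image (fun p : Fin r × ℕ => ℓ p.1 ^ p.2) with hAdef
  set W : Submodule ℂ (MvPolynomial (Fin n) ℂ) := Submodule.span ℂ (A : Set _) with hWdef
  haveI : FiniteDimensional ℂ W := FiniteDimensional.span_of_finite ℂ A.finite_toSet
  have hsne : ∀ i ∈ S, s i ≠ 0 := by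
    intro i hi h0
    exact (Finset.mem_filter.mp hi).2 (by rw [hsC i, h0, map_zero])
  have hgen : ∀ i ∈ S, ∀ k < e + 1, ℓ i ^ k ∈ W := by
    intro i hi k hk
    exact Submodule.subset_span (Finset.mem_coe.mpr (Finset.mem_image.mpr
      ⟨(i, k), Finset.mem_product.mpr ⟨hi, Finset.mem_range.mpr hk⟩, rfl⟩))
  have hDpow : ∀ (i : Fin r) (k : ℕ),
      diffOp α (ℓ i ^ (k + 1)) = (((k + 1 : ℕ) : ℂ) * s i) • ℓ i ^ k := by
    intro i k
    rw [diffOp_pow hα, hsC i, MvPolynomial.smul_eq_C_mul, map_mul]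
  have hpd : ∀ (j : Fin n), ∀ x ∈ W, MvPolynomial.pderiv j x ∈ W := by
    intro j
    have hmap : Submodule.map (MvPolynomial.pderiv j).toLinearMap W ≤ W := by
      rw [hWdef, Submodule.map_span, Submodule.span_le]
      rintro y ⟨z, hz, rfl⟩
      obtain ⟨⟨i, k⟩, hik, rfl⟩ := Finset.mem_image.mp (Finset.mem_coe.mp hz)
      obtain ⟨hi, hk⟩ := Finset.mem_product.mp hik
      rw [Finset.mem_range] at hk
      cases k with
      | zero =>
        have h0 : MvPolynomial.pderiv j (ℓ i ^ 0) = 0 := by simp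
        exact (SetLike.mem_coe.mpr (by
          show MvPolynomial.pderiv j (ℓ i ^ 0) ∈ W
          rw [h0]; exact zero_mem W) :
          MvPolynomial.pderiv j (ℓ i ^ 0) ∈ (W : Set (MvPolynomial (Fin n) ℂ)))
      | succ k =>
        obtain ⟨a, ha⟩ := pderiv_linear_C (hℓ i) j
        have hrw : MvPolynomial.pderiv j (ℓ i ^ (k + 1))
            = (((k + 1 : ℕ) : ℂ) * a) • ℓ i ^ k := by
          rw [MvPolynomial.pderiv_pow, ha, MvPolynomial.smul_eq_C_mul]
          simp only [map_add, map_mul, map_natCast, map_one]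
          push_cast
          ring
        have hmem' : MvPolynomial.pderiv j (ℓ i ^ (k + 1)) ∈ W := by
          rw [hrw]
          exact Submodule.smul_mem _ _ (hgen i hi k (by omega))
        exact SetLike.mem_coe.mpr hmem'
    intro x hx
    exact hmap ⟨x, hx, rfl⟩
  have hsingle : ∀ (a : Fin n) (b : ℕ), ∀ x ∈ W, mderiv (Finsupp.single a b) x ∈ W := by
    intro a b
    induction b with
    | zero => intro x hx; rw [Finsupp.single_zero, mderiv_zero]; exact hx
    | succ b ih =>
        intro x hx
        have h1 : Finsupp.single a (b + 1) = Finsupp.single a 1 + Finsupp.single a b := by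
          rw [← Finsupp.single_add]
          congr 1
          omega
        rw [h1, ← mderiv_mderiv, mderiv_single]
        exact ih _ (hpd a x hx)
  have hmder : ∀ (m : Fin n →₀ ℕ), ∀ x ∈ W, mderiv m x ∈ W := by
    intro m
    induction m using Finsupp.induction with
    | zero => intro x hx; rw [mderiv_zero]; exact hx
    | single_add a b f haf hb ih =>
        intro x hx
        rw [← mderiv_mderiv]
        exact ih _ (hsingle a b x hx)
  have hop : ∀ Θ, ∀ x ∈ W, diffOp Θ x ∈ W := by
    intro Θ x hx
    rw [diffOp_eq_sum]
    exact Submodule.sum_mem _ fun m _ => Submodule.smul_mem _ _ (hmder m x hx)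
  set G := diffOp α F with hGdef
  have hGW : G ∈ W := by
    rw [hGsum]
    apply Submodule.sum_mem
    intro i _
    rw [hDpow i e, smul_smul]
    by_cases hi : diffOp α (ℓ i) ≠ 0
    · exact Submodule.smul_mem _ _
        (hgen i (Finset.mem_filter.mpr ⟨Finset.mem_univ _, hi⟩) e (by omega))
    · push_neg at hi
      have hs0 : s i = 0 := by
        have h := hsC i
        rw [hi] at h
        exact ((MvPolynomial.C_injective (Fin n) ℂ).eq_iff.mp (by rw [← h, map_zero])).symm
      rw [hs0, mul_zero, mul_zero, zero_smul]
      exact zero_mem _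
  set P : Submodule ℂ (MvPolynomial (Fin n) ℂ) :=
    Submodule.span ℂ (Set.range fun Θ => diffOp Θ G) with hPdef
  have hPW : P ≤ W := Submodule.span_le.mpr (by rintro y ⟨Θ, rfl⟩; exact hop Θ G hGW)
  haveI : FiniteDimensional ℂ P := Submodule.finiteDimensional_of_le hPW
  set f : MvPolynomial (Fin n) ℂ →ₗ[ℂ] MvPolynomial (Fin n) ℂ := diffOpL α with hfdef
  have hal1 : apolarLength (diffOp α F) = Module.finrank ℂ P := rfl
  have key2 : diffOp (α ^ 2) F = f G := by
    rw [sq, diffOp_mul]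
    rfl
  have hcomp : (fun Θ => diffOp Θ (f G)) = fun Θ => f (diffOp Θ G) := by
    funext Θ
    show diffOp Θ (diffOp α G) = diffOp α (diffOp Θ G)
    rw [← diffOp_mul Θ α G, ← diffOp_mul α Θ G, mul_comm]
  have hal2 : apolarLength (diffOp (α ^ 2) F) = Module.finrank ℂ (P.map f) := by
    unfold apolarLength
    rw [key2, hcomp, show (Set.range fun Θ => f (diffOp Θ G))
        = f '' (Set.range fun Θ => diffOp Θ G) from (Set.range_comp f _),
      Submodule.span_image]
  set A' : Finset (MvPolynomial (Fin n) ℂ) :=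
    (S ×ˢ Finset.range e).image (fun p : Fin r × ℕ => ℓ p.1 ^ p.2) with hA'def
  set W' : Submodule ℂ (MvPolynomial (Fin n) ℂ) := Submodule.span ℂ (A' : Set _) with hW'def
  haveI : FiniteDimensional ℂ W' := FiniteDimensional.span_of_finite ℂ A'.finite_toSet
  have hW'map : W' ≤ Submodule.map f W := by
    rw [hW'def, Submodule.span_le]
    rintro y hy
    obtain ⟨⟨i, k⟩, hik, rfl⟩ := Finset.mem_image.mp (Finset.mem_coe.mp hy)
    obtain ⟨hi, hk⟩ := Finset.mem_product.mp hik
    rw [Finset.mem_range] at hk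
    have hfk : f (ℓ i ^ (k + 1)) = (((k + 1 : ℕ) : ℂ) * s i) • ℓ i ^ k := hDpow i k
    have hne : (((k + 1 : ℕ) : ℂ) * s i) ≠ 0 :=
      mul_ne_zero (Nat.cast_ne_zero.mpr (Nat.succ_ne_zero k)) (hsne i hi)
    have hmem : ℓ i ^ (k + 1) ∈ W := hgen i hi (k + 1) (by omega)
    have hx : ℓ i ^ k = (((k + 1 : ℕ) : ℂ) * s i)⁻¹ • f (ℓ i ^ (k + 1)) := by
      rw [hfk, smul_smul, inv_mul_cancel₀ hne, one_smul]
    rw [SetLike.mem_coe, hx]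
    exact Submodule.smul_mem _ _ (Submodule.mem_map_of_mem hmem)
  set B : Finset (MvPolynomial (Fin n) ℂ) := S.image (fun i => ℓ i ^ e) with hBdef
  set WB : Submodule ℂ (MvPolynomial (Fin n) ℂ) := Submodule.span ℂ (B : Set _) with hWBdef
  haveI : FiniteDimensional ℂ WB := FiniteDimensional.span_of_finite ℂ B.finite_toSet
  have hWsup : W ≤ W' ⊔ WB := by
    rw [hWdef, Submodule.span_le]
    rintro y hy
    obtain ⟨⟨i, k⟩, hik, rfl⟩ := Finset.mem_image.mp (Finset.mem_coe.mp hy)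
    obtain ⟨hi, hk⟩ := Finset.mem_product.mp hik
    rw [Finset.mem_range] at hk
    rcases Nat.lt_or_ge k e with hke | hke
    · exact SetLike.mem_coe.mpr (Submodule.mem_sup_left (Submodule.subset_span
        (Finset.mem_coe.mpr (Finset.mem_image.mpr
          ⟨(i, k), Finset.mem_product.mpr ⟨hi, Finset.mem_range.mpr hke⟩, rfl⟩))))
    · have : k = e := by omega
      subst this
      exact SetLike.mem_coe.mpr (Submodule.mem_sup_right (Submodule.subset_span
        (Finset.mem_coe.mpr (Finset.mem_image.mpr ⟨i, hi, rfl⟩))))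
  haveI : FiniteDimensional ℂ (Submodule.map f W) := by
    rw [hWdef, Submodule.map_span]
    exact FiniteDimensional.span_of_finite ℂ (A.finite_toSet.image f)
  haveI : FiniteDimensional ℂ (LinearMap.ker f ⊓ W : Submodule ℂ (MvPolynomial (Fin n) ℂ)) :=
    Submodule.finiteDimensional_of_le inf_le_right
  have n1 := finrank_map_add_inf f P
  have n2 := finrank_map_add_inf f W
  have n3 : Module.finrank ℂ (LinearMap.ker f ⊓ P : Submodule ℂ (MvPolynomial (Fin n) ℂ))
      ≤ Module.finrank ℂ (LinearMap.ker f ⊓ W : Submodule ℂ (MvPolynomial (Fin n) ℂ)) :=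
    Submodule.finrank_mono (inf_le_inf_left _ hPW)
  have n4 : Module.finrank ℂ W ≤ Module.finrank ℂ W' + S.card := by
    calc Module.finrank ℂ W ≤ Module.finrank ℂ (W' ⊔ WB : Submodule ℂ _) :=
          Submodule.finrank_mono hWsup
      _ ≤ Module.finrank ℂ W' + Module.finrank ℂ WB :=
          Submodule.finrank_add_le_finrank_add_finrank _ _
      _ ≤ Module.finrank ℂ W' + S.card := by
          have h1 : Module.finrank ℂ WB ≤ B.card := finrank_span_finset_le_card B
          have h2 : B.card ≤ S.card := Finset.card_image_le
          omega
  have n5 : Module.finrank ℂ W' ≤ Module.finrank ℂ (Submodule.map f W) :=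
    Submodule.finrank_mono hW'map
  have hncard : {i : Fin r | diffOp α (ℓ i) ≠ 0}.ncard = S.card := by
    rw [show {i : Fin r | diffOp α (ℓ i) ≠ 0} = (S : Set (Fin r)) by
      ext i
      simp [hSdef]]
    exact Set.ncard_coe_finset S
  rw [hal1, hal2, hncard]
  omega
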